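/- Let A be a uniform algebra on a compact Hausdorff space X, let x ∈ X be a point of continuity for A, and let E be a compact subset of X \ {x} such that {f² : f ∈ I(E)} is dense in I(E). Then for every open neighbourhood U of x there exists f ∈ A with |f|_{X\U} < 1/3, |f(x)| > 2/3, and |f|_X < 2. -/

import Mathlib

open Set Metric Complex

noncomputable section

variable {X : Type*} [TopologicalSpace X]

/-- A point `x` is a point of continuity for a subalgebra `A` of `C(X)` if for every compact
set `E ⊆ X \ {x}` there is `f ∈ A` with `f x = 1` and `f ≡ 0` on `E`. -/
def IsPointOfContinuity (A : Subalgebra ℂ C(X, ℂ)) (x : X) : Prop :=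
  ∀ E : Set X, IsCompact E → x ∉ E → ∃ f ∈ A, f x = 1 ∧ ∀ y ∈ E, f y = 0

/-- `I(E)`: the ideal of functions in `A` vanishing identically on `E`. -/
def vanishIdeal (A : Subalgebra ℂ C(X, ℂ)) (E : Set X) : Set C(X, ℂ) :=
  {f | f ∈ A ∧ ∀ y ∈ E, f y = 0}

/-- A point `x` is a strong boundary point for `A` if for every open neighbourhood `U` of `x`
there is `f ∈ A` with `f x = 1 = |f|_X` and `|f(y)| < 1` for `y ∉ U`. -/
def IsStrongBoundaryPoint (A : Subalgebra ℂ C(X, ℂ)) (x : X) : Prop :=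
  ∀ U : Set X, IsOpen U → x ∈ U →
    ∃ f ∈ A, f x = 1 ∧ (∀ y : X, ‖f y‖ ≤ 1) ∧ ∀ y ∉ U, ‖f y‖ < 1

/-- (Key estimate in the proof of Lemma 3.3, towards Gonchar's criterion.) Let `A` be a
uniform algebra on a compact Hausdorff space `X`, let `x` be a point of continuity for `A`,
and let `E` be a compact subset of `X \ {x}` such that `{f² : f ∈ I(E)}` is dense in `I(E)`.
Then for every open neighbourhood `U` of `x` there is `f ∈ A` with `|f|_{X \ U} < 1/3`,
`|f(x)| > 2/3` and `|f|_X < 2`. -/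
theorem gonchar_estimate
    {X : Type*} [TopologicalSpace X] [CompactSpace X] [T2Space X]
    (A : Subalgebra ℂ C(X, ℂ)) (hAclosed : IsClosed (A : Set C(X, ℂ)))
    (hAsep : ∀ x y : X, x ≠ y → ∃ f ∈ A, f x ≠ f y)
    (x : X) (hx : IsPointOfContinuity A x)
    (E : Set X) (hE : IsCompact E) (hxE : x ∉ E)
    (hdense : vanishIdeal A E ⊆ closure ((fun f => f * f) '' vanishIdeal A E)) :
    ∀ U : Set X, IsOpen U → x ∈ U →
      ∃ f ∈ A, sSup ((fun y => ‖f y‖) '' Uᶜ) < 1 / 3 ∧ 2 / 3 < ‖f x‖ ∧ ‖f‖ < 2 := by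
  intro U hU hxU
  -- A function g vanishing on E ∪ Uᶜ with g x = 1
  have hUc : IsCompact (E ∪ Uᶜ) := hE.union hU.isClosed_compl.isCompact
  have hxnot : x ∉ E ∪ Uᶜ := by
    rintro (h | h)
    · exact hxE h
    · exact h hxU
  obtain ⟨g, hgA, hgx, hg0⟩ := hx (E ∪ Uᶜ) hUc hxnot
  have hgE : g ∈ vanishIdeal A E := ⟨hgA, fun y hy => hg0 y (Or.inl hy)⟩
  set M : ℝ := ‖g‖ with hM
  -- key iteration
  have key : ∀ k : ℕ, ∀ δ : ℝ, 0 < δ → δ < 1 →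
      ∃ f ∈ vanishIdeal A E,
        ‖f‖ ^ (2 ^ k) < M + δ ∧ 1 - δ < ‖f x‖ ^ (2 ^ k) ∧
        sSup ((fun y => ‖f y‖) '' Uᶜ) ^ (2 ^ k) < δ := by
    intro k
    induction k with
    | zero =>
      intro δ hδ hδ1
      refine ⟨g, hgE, ?_, ?_, ?_⟩
      · simp only [pow_zero, pow_one]
        exact lt_add_of_pos_right M hδ
      · simp only [pow_one, hgx]
        norm_num
        linarith
      · have hle : sSup ((fun y => ‖g y‖) '' Uᶜ) ≤ 0 := by
          apply Real.sSup_le _ le_rfl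
          rintro b ⟨y, hy, rfl⟩
          simp [hg0 y (Or.inr hy)]
        simpa using lt_of_le_of_lt hle hδ
    | succ k ih =>
      intro δ hδ hδ1
      obtain ⟨f, hfI, h1, h2, h3⟩ := ih δ hδ hδ1
      set s := sSup ((fun y => ‖f y‖) '' Uᶜ) with hs
      have hsBdd : BddAbove ((fun y => ‖f y‖) '' Uᶜ) := by
        refine ⟨‖f‖, ?_⟩
        rintro b ⟨y, hy, rfl⟩
        exact f.norm_coe_le_norm y
      have hs0 : 0 ≤ s := Real.sSup_nonneg fun b hb => by
        obtain ⟨y, hy, rfl⟩ := hb; exact norm_nonneg _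
      have hfx0 : 0 < ‖f x‖ := by
        by_contra hcon
        push_neg at hcon
        have hz : ‖f x‖ = 0 := le_antisymm hcon (norm_nonneg _)
        rw [hz, zero_pow (by positivity)] at h2
        linarith
      -- choose ε > 0 small enough
      have hev : {ε : ℝ | (‖f‖ + ε) ^ (2 ^ k) < M + δ ∧
          1 - δ < (‖f x‖ - ε) ^ (2 ^ k) ∧ (s + ε) ^ (2 ^ k) < δ ∧ ε < ‖f x‖} ∈ nhds (0 : ℝ) := by
        have c1 : ContinuousAt (fun ε : ℝ => (‖f‖ + ε) ^ (2 ^ k)) 0 := by fun_prop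
        have c2 : ContinuousAt (fun ε : ℝ => (‖f x‖ - ε) ^ (2 ^ k)) 0 := by fun_prop
        have c3 : ContinuousAt (fun ε : ℝ => (s + ε) ^ (2 ^ k)) 0 := by fun_prop
        have m1 := c1.preimage_mem_nhds (Iio_mem_nhds (by simpa using h1))
        have m2 := c2.preimage_mem_nhds (Ioi_mem_nhds (by simpa using h2))
        have m3 := c3.preimage_mem_nhds (Iio_mem_nhds (by simpa using h3))
        have m4 : Iio ‖f x‖ ∈ nhds (0 : ℝ) := Iio_mem_nhds hfx0
        filter_upwards [m1, m2, m3, m4] with ε e1 e2 e3 e4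
        exact ⟨e1, e2, e3, e4⟩
      obtain ⟨r, hr, hball⟩ := Metric.mem_nhds_iff.mp hev
      set ε := r / 2 with hε
      have hε0 : 0 < ε := by positivity
      have hmem : ε ∈ Metric.ball (0 : ℝ) r := by
        simp only [Metric.mem_ball, Real.dist_eq, sub_zero]
        rw [abs_of_pos hε0]
        linarith
      obtain ⟨e1, e2, e3, e4⟩ := hball hmem
      -- approximate square root
      obtain ⟨q, ⟨h, hhI, rfl⟩, hdist⟩ :=
        Metric.mem_closure_iff.mp (hdense hfI) ε hε0
      rw [dist_eq_norm] at hdist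
      -- pointwise estimates
      have hpt : ∀ y : X, ‖h y‖ ^ 2 ≤ ‖f y‖ + ε := by
        intro y
        have : ‖h y‖ ^ 2 = ‖(h * h) y‖ := by
          simp [ContinuousMap.mul_apply, sq]
        rw [this]
        calc ‖(h * h) y‖ ≤ ‖f y‖ + ‖((h * h) - f) y‖ := by
              have := norm_add_le (f y) (((h * h) - f) y)
              simpa using this
          _ ≤ ‖f y‖ + ‖(h * h) - f‖ := by
              have := ((h * h) - f).norm_coe_le_norm y
              linarith
          _ ≤ ‖f y‖ + ε := by
              have : ‖(h * h) - f‖ = ‖f - (h * h)‖ := norm_sub_rev _ _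
              linarith
      have hpow : ∀ a : ℝ, a ^ 2 ^ (k + 1) = (a ^ 2) ^ 2 ^ k := fun a => by
        rw [← pow_mul]
        congr 1
        rw [pow_succ]
        ring
      have hfε0 : (0 : ℝ) ≤ ‖f‖ + ε := by positivity
      have hsε0 : (0 : ℝ) ≤ s + ε := by positivity
      -- norm bound for h
      have hhn : ‖h‖ ^ 2 ≤ ‖f‖ + ε := by
        have hle : ‖h‖ ≤ Real.sqrt (‖f‖ + ε) := by
          rw [h.norm_le (Real.sqrt_nonneg _)]
          intro y
          refine (Real.le_sqrt (norm_nonneg _) hfε0).mpr ?_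
          exact le_trans (hpt y) (by linarith [f.norm_coe_le_norm y])
        calc ‖h‖ ^ 2 ≤ Real.sqrt (‖f‖ + ε) ^ 2 :=
              pow_le_pow_left₀ (norm_nonneg _) hle 2
          _ = ‖f‖ + ε := Real.sq_sqrt hfε0
      -- value at x
      have hx2 : ‖f x‖ - ε ≤ ‖h x‖ ^ 2 := by
        have hq : ‖h x‖ ^ 2 = ‖(h * h) x‖ := by
          simp [ContinuousMap.mul_apply, sq]
        rw [hq]
        have : ‖f x‖ ≤ ‖(h * h) x‖ + ‖(f - (h * h)) x‖ := by
          have := norm_add_le ((h * h) x) ((f - (h * h)) x)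
          simpa using this
        have hb := (f - (h * h)).norm_coe_le_norm x
        linarith
      -- sup bound on Uᶜ
      set s' := sSup ((fun y => ‖h y‖) '' Uᶜ) with hs'
      have hs'0 : 0 ≤ s' := Real.sSup_nonneg fun b hb => by
        obtain ⟨y, hy, rfl⟩ := hb; exact norm_nonneg _
      have hs'2 : s' ^ 2 ≤ s + ε := by
        have hle : s' ≤ Real.sqrt (s + ε) := by
          apply Real.sSup_le _ (Real.sqrt_nonneg _)
          rintro b ⟨y, hy, rfl⟩
          refine (Real.le_sqrt (norm_nonneg _) hsε0).mpr ?_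
          have : ‖f y‖ ≤ s := le_csSup hsBdd ⟨y, hy, rfl⟩
          linarith [hpt y]
        calc s' ^ 2 ≤ Real.sqrt (s + ε) ^ 2 := pow_le_pow_left₀ hs'0 hle 2
          _ = s + ε := Real.sq_sqrt hsε0
      refine ⟨h, hhI, ?_, ?_, ?_⟩
      · rw [hpow]
        exact lt_of_le_of_lt (pow_le_pow_left₀ (sq_nonneg _) hhn _) e1
      · rw [hpow]
        refine lt_of_lt_of_le e2 ?_
        exact pow_le_pow_left₀ (by linarith) hx2 _
      · rw [hpow]
        exact lt_of_le_of_lt (pow_le_pow_left₀ (sq_nonneg _) hs'2 _) e3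
  -- choose the number of iterations and the tolerance
  set n := ⌈M⌉₊ with hn
  set N := 2 ^ n with hN
  have hNpos : 0 < N := by positivity
  have hM1 : M + 1 ≤ (2 : ℝ) ^ N := by
    have h1 : M ≤ (n : ℝ) := Nat.le_ceil M
    have h2 : (n : ℝ) + 1 ≤ (2 : ℝ) ^ n := by
      have := @Nat.lt_two_pow_self n
      have : (n : ℝ) + 1 ≤ ((2 ^ n : ℕ) : ℝ) := by exact_mod_cast this
      simpa using this
    have h3 : (2 : ℝ) ^ n ≤ (2 : ℝ) ^ N := by
      exact pow_le_pow_right₀ (by norm_num) (Nat.le_of_lt (@Nat.lt_two_pow_self n))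
    linarith
  set δ : ℝ := min ((1 / 3 : ℝ) ^ N) (1 - (2 / 3 : ℝ) ^ N) with hδdef
  have h23 : (2 / 3 : ℝ) ^ N < 1 := pow_lt_one₀ (by norm_num) (by norm_num) (Nat.pos_iff_ne_zero.mp hNpos)
  have hδ0 : 0 < δ := lt_min (by positivity) (by linarith)
  have hδ1 : δ < 1 := by
    have : δ ≤ (1 / 3 : ℝ) ^ N := min_le_left _ _
    have h13 : (1 / 3 : ℝ) ^ N < 1 := pow_lt_one₀ (by norm_num) (by norm_num) (Nat.pos_iff_ne_zero.mp hNpos)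
    linarith
  obtain ⟨f, hfI, h1, h2, h3⟩ := key n δ hδ0 hδ1
  refine ⟨f, hfI.1, ?_, ?_, ?_⟩
  · have : sSup ((fun y => ‖f y‖) '' Uᶜ) ^ N < (1 / 3 : ℝ) ^ N :=
      lt_of_lt_of_le h3 (min_le_left _ _)
    exact lt_of_pow_lt_pow_left₀ N (by norm_num) this
  · have hδle : δ ≤ 1 - (2 / 3 : ℝ) ^ N := min_le_right _ _
    have : (2 / 3 : ℝ) ^ N < ‖f x‖ ^ N := by linarith
    exact lt_of_pow_lt_pow_left₀ N (norm_nonneg _) this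
  · have : ‖f‖ ^ N < (2 : ℝ) ^ N := by linarith
    exact lt_of_pow_lt_pow_left₀ N (by norm_num) this
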